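/- With V, B, Q, Z, z₀ and 𝒞⁺_ρ as in the context (Q negative semi-definite on the kernel of Z): for all w₁, w₂ ∈ 𝒞⁺_ρ one has B(w₁, w₂) ≥ 0. -/
import Mathlib


namespace BridgelandNotes

variable {V : Type*} [AddCommGroup V] [Module ℝ V]

/-- The cone `𝒞⁺_ρ = {w ∈ V : Z(w) ∈ ρ and Q(w) ≥ 0}`, where `ρ = {t·z₀ : t > 0}`
is the open ray through `z₀` and `Q(w) = B(w, w)`. -/
def posCone (B : V →ₗ[ℝ] V →ₗ[ℝ] ℝ) (Z : V →ₗ[ℝ] ℂ) (z₀ : ℂ) : Set V :=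
  {w | (∃ t : ℝ, 0 < t ∧ Z w = t • z₀) ∧ 0 ≤ B w w}

/-- If the quadratic form `Q(w) = B(w,w)` is negative semi-definite on the kernel of
`Z`, then `B(w₁, w₂) ≥ 0` for all `w₁, w₂ ∈ 𝒞⁺_ρ`. -/
theorem bilin_nonneg_on_posCone (B : V →ₗ[ℝ] V →ₗ[ℝ] ℝ)
    (hsymm : ∀ x y : V, B x y = B y x)
    (Z : V →ₗ[ℝ] ℂ) (hker : ∀ v : V, Z v = 0 → B v v ≤ 0)
    (z₀ : ℂ) (hz₀ : z₀ ≠ 0)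
    (w₁ w₂ : V) (h₁ : w₁ ∈ posCone B Z z₀) (h₂ : w₂ ∈ posCone B Z z₀) :
    0 ≤ B w₁ w₂ := by
  obtain ⟨⟨t₁, ht₁, hZ₁⟩, hQ₁⟩ := h₁
  obtain ⟨⟨t₂, ht₂, hZ₂⟩, hQ₂⟩ := h₂
  set v : V := t₂ • w₁ - t₁ • w₂ with hv
  have hZv : Z v = 0 := by
    simp [hv, hZ₁, hZ₂, smul_smul, mul_comm]
    ring
  have hQv : B v v ≤ 0 := hker v hZv
  have hexp : B v v = t₂ ^ 2 * B w₁ w₁ - 2 * (t₁ * t₂) * B w₁ w₂ + t₁ ^ 2 * B w₂ w₂ := by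
    simp [hv, hsymm w₂ w₁]
    ring
  have key : 0 ≤ 2 * (t₁ * t₂) * B w₁ w₂ := by
    nlinarith [mul_nonneg (sq_nonneg t₂) hQ₁, mul_nonneg (sq_nonneg t₁) hQ₂]
  have hpos : 0 < 2 * (t₁ * t₂) := by positivity
  exact nonneg_of_mul_nonneg_right key hpos

end BridgelandNotes
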